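/- Let k be a field of characteristic ≠ 2 and P a finite-dimensional k-vector space of dimension m ≥ 1. The hyperbolic quadratic form H(P) on P* ⊕ P, defined by (t, v) ↦ t(v), is nondegenerate, and its Clifford algebra C(H(P)) is isomorphic as a k-algebra to End(Λ P), the endomorphism algebra of the exterior algebra of P. In particular C(H(P)) has dimension 2^(2m) and is a central simple k-algebra with trivial Brauer class. -/

import Mathlib

noncomputable section

/-- The hyperbolic bilinear map `B((t,v),(s,w)) = t w` on `P* × P`. -/
def hypBilin (k P : Type) [Field k] [AddCommGroup P] [Module k P] :
    LinearMap.BilinMap k (Module.Dual k P × P) k :=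
  LinearMap.mk₂ k (fun x y => x.1 y.2)
    (fun _ _ _ => by simp)
    (fun _ _ _ => by simp)
    (fun _ _ _ => by simp)
    (fun _ _ _ => by simp)

/-- The hyperbolic quadratic form `H(P)` on `P* ⊕ P`, given by `(t, v) ↦ t v`. -/
def hypForm (k P : Type) [Field k] [AddCommGroup P] [Module k P] :
    QuadraticForm k (Module.Dual k P × P) :=
  (hypBilin k P).toQuadraticMap

/-- A finite-dimensional algebra is split, i.e. has trivial Brauer class. -/
def IsBrauerTrivial (k A : Type) [Field k] [Ring A] [Algebra k A] : Prop :=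
  ∃ n : ℕ, 0 < n ∧ Nonempty (A ≃ₐ[k] Matrix (Fin n) (Fin n) k)


namespace CliffHyp

open CliffordAlgebra

section Ext

variable {k : Type} [Field k] {W : Type} [AddCommGroup W] [Module k W]
variable {n : ℕ} (b : Module.Basis (Fin n) k W)

local notation "ι0" => CliffordAlgebra.ι (0 : QuadraticForm k W)

def wedgeL (l : List (Fin n)) : ExteriorAlgebra k W :=
  (l.map fun i => ι0 (b i)).prod

@[simp] lemma wedgeL_nil : wedgeL b [] = 1 := rfl

@[simp] lemma wedgeL_cons (i : Fin n) (l : List (Fin n)) :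
    wedgeL b (i :: l) = ι0 (b i) * wedgeL b l := by simp [wedgeL]

lemma wedgeL_append (l l' : List (Fin n)) :
    wedgeL b (l ++ l') = wedgeL b l * wedgeL b l' := by simp [wedgeL]

lemma ι0_anticomm (v w : W) : ι0 v * ι0 w = -(ι0 w * ι0 v) := by
  have := CliffordAlgebra.ι_mul_ι_add_swap (Q := (0 : QuadraticForm k W)) v w
  rw [QuadraticMap.polar] at this
  simp only [QuadraticMap.zero_apply, sub_zero, sub_self, map_zero] at this
  exact eq_neg_of_add_eq_zero_left this

@[simp] lemma ι0_sq (v : W) : ι0 v * ι0 v = 0 := by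
  rw [CliffordAlgebra.ι_sq_scalar]; simp

def dd (j : Fin n) : ExteriorAlgebra k W →ₗ[k] ExteriorAlgebra k W :=
  contractLeft (Q := (0 : QuadraticForm k W)) (b.coord j)

lemma dd_ι_mul (j i : Fin n) (x : ExteriorAlgebra k W) :
    dd b j (ι0 (b i) * x)
      = (if i = j then (1:k) else 0) • x - ι0 (b i) * dd b j x := by
  rw [dd, contractLeft_ι_mul]
  congr 2
  simp [Module.Basis.coord_apply, Module.Basis.repr_self_apply, Finsupp.single_apply]

lemma dd_wedgeL_not_mem (j : Fin n) :
    ∀ l : List (Fin n), j ∉ l → dd b j (wedgeL b l) = 0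
  | [], _ => by simp [dd]
  | i :: l, h => by
    have h1 : ¬ i = j := fun e => h (by rw [← e]; exact List.mem_cons_self)
    rw [wedgeL_cons, dd_ι_mul, dd_wedgeL_not_mem j l (fun hl => h (List.mem_cons_of_mem _ hl)),
      mul_zero, sub_zero, if_neg h1, zero_smul]

lemma neg_one_pow_mul_self (t : ℕ) : ((-1:k)^t) * ((-1:k)^t) = 1 := by
  rw [← pow_add]; exact Even.neg_one_pow ⟨t, rfl⟩

lemma moveFront (j : Fin n) :
    ∀ l : List (Fin n), l.Nodup → j ∈ l →
      ∃ t : ℕ, wedgeL b l = ((-1:k)^t) • wedgeL b (j :: l.erase j)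
  | [], _, h => absurd h (List.not_mem_nil)
  | i :: l, hnd, h => by
    rcases eq_or_ne j i with rfl | hne
    · exact ⟨0, by simp [List.erase_cons_head]⟩
    · have hjl : j ∈ l := (List.mem_cons.mp h).resolve_left hne
      obtain ⟨t, ht⟩ := moveFront j l (List.Nodup.of_cons hnd) hjl
      refine ⟨t + 1, ?_⟩
      rw [List.erase_cons_tail (by simpa using fun h => hne h.symm)]
      rw [wedgeL_cons, ht, mul_smul_comm]
      rw [wedgeL_cons, wedgeL_cons, wedgeL_cons]
      rw [← mul_assoc, ι0_anticomm (b i) (b j), pow_succ]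
      simp [mul_assoc, mul_smul_comm, smul_smul, mul_comm]


lemma dd_wedgeL_mem (j : Fin n) (l : List (Fin n)) (hnd : l.Nodup) (hj : j ∈ l) :
    ∃ t : ℕ, dd b j (wedgeL b l) = ((-1:k)^t) • wedgeL b (l.erase j) ∧
      wedgeL b l = ((-1:k)^t) • wedgeL b (j :: l.erase j) := by
  obtain ⟨t, ht⟩ := moveFront b j l hnd hj
  refine ⟨t, ?_, ht⟩
  rw [ht, map_smul, wedgeL_cons, dd_ι_mul, if_pos rfl, one_smul,
    dd_wedgeL_not_mem b j _ (List.Nodup.not_mem_erase hnd), mul_zero, sub_zero]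

lemma reinsert (j : Fin n) (l : List (Fin n)) (hnd : l.Nodup) (hj : j ∈ l) :
    ι0 (b j) * dd b j (wedgeL b l) = wedgeL b l := by
  obtain ⟨t, hd, hm⟩ := dd_wedgeL_mem b j l hnd hj
  have hm' : wedgeL b (j :: l.erase j) = ((-1:k)^t) • wedgeL b l := by
    rw [hm, smul_smul, neg_one_pow_mul_self, one_smul]
  rw [hd, mul_smul_comm, ← wedgeL_cons, hm', smul_smul, neg_one_pow_mul_self, one_smul]

/-! ### Finset wedges -/

def wedgeS (S : Finset (Fin n)) : ExteriorAlgebra k W :=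
  wedgeL b (S.sort (· ≤ ·))

@[simp] lemma wedgeS_empty : wedgeS b ∅ = 1 := by simp [wedgeS]

lemma sort_erase (S : Finset (Fin n)) (j : Fin n) :
    (S.sort (· ≤ ·)).erase j = (S.erase j).sort (· ≤ ·) := by
  refine (fun h1 h2 h3 => List.Perm.eq_of_pairwise' h2 h3 h1) ?_ ?_ (Finset.pairwise_sort _ _)
  · refine (List.perm_ext_iff_of_nodup ((Finset.sort_nodup _ _).erase _)
      (Finset.sort_nodup _ _)).2 fun a => ?_
    rw [(Finset.sort_nodup _ _).mem_erase_iff]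
    simp [Finset.mem_sort, Finset.mem_erase]
  · exact List.Pairwise.sublist (List.erase_sublist) (Finset.pairwise_sort _ _)

lemma dd_wedgeS_not_mem (j : Fin n) (S : Finset (Fin n)) (h : j ∉ S) :
    dd b j (wedgeS b S) = 0 :=
  dd_wedgeL_not_mem b j _ (by simpa [Finset.mem_sort] using h)

lemma dd_wedgeS_mem (j : Fin n) (S : Finset (Fin n)) (h : j ∈ S) :
    ∃ t : ℕ, dd b j (wedgeS b S) = ((-1:k)^t) • wedgeS b (S.erase j) := by
  obtain ⟨t, hd, -⟩ := dd_wedgeL_mem b j (S.sort (· ≤ ·)) (Finset.sort_nodup _ _)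
    (by simpa [Finset.mem_sort] using h)
  exact ⟨t, by rw [wedgeS, hd, sort_erase, wedgeS]⟩

lemma insert_sort (i : Fin n) (S : Finset (Fin n)) (h : i ∉ S) :
    ∃ t : ℕ, ι0 (b i) * wedgeS b S = ((-1:k)^t) • wedgeS b (insert i S) := by
  obtain ⟨t, ht⟩ := moveFront b i ((insert i S).sort (· ≤ ·)) (Finset.sort_nodup _ _)
    (by simp [Finset.mem_sort])
  rw [sort_erase, Finset.erase_insert h] at ht
  refine ⟨t, ?_⟩
  have : wedgeS b (insert i S) = ((-1:k)^t) • (ι0 (b i) * wedgeS b S) := by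
    rw [show wedgeS b (insert i S) = wedgeL b ((insert i S).sort (· ≤ ·)) from rfl, ht,
      wedgeL_cons]; rfl
  rw [this, smul_smul, neg_one_pow_mul_self, one_smul]

lemma mul_wedgeS_mem_span (i : Fin n) (S : Finset (Fin n)) :
    ι0 (b i) * wedgeS b S ∈ Submodule.span k (Set.range (wedgeS b)) := by
  by_cases h : i ∈ S
  · obtain ⟨t, ht⟩ := moveFront b i (S.sort (· ≤ ·)) (Finset.sort_nodup _ _)
      (by simpa [Finset.mem_sort] using h)
    rw [wedgeS, ht, mul_smul_comm, wedgeL_cons, ← mul_assoc, ι0_sq, zero_mul, smul_zero]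
    exact Submodule.zero_mem _
  · obtain ⟨t, ht⟩ := insert_sort b i S h
    rw [ht]
    exact Submodule.smul_mem _ _ (Submodule.subset_span ⟨_, rfl⟩)


lemma mul_mem_span (i : Fin n) (x : ExteriorAlgebra k W)
    (hx : x ∈ Submodule.span k (Set.range (wedgeS b))) :
    ι0 (b i) * x ∈ Submodule.span k (Set.range (wedgeS b)) := by
  induction hx using Submodule.span_induction with
  | mem x hx => obtain ⟨S, rfl⟩ := hx; exact mul_wedgeS_mem_span b i S
  | zero => simpa using Submodule.zero_mem _
  | add x y _ _ hx hy => rw [mul_add]; exact Submodule.add_mem _ hx hy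
  | smul c x _ hx => rw [mul_smul_comm]; exact Submodule.smul_mem _ _ hx

lemma wedgeL_mem_span (l : List (Fin n)) :
    wedgeL b l ∈ Submodule.span k (Set.range (wedgeS b)) := by
  induction l with
  | nil => exact Submodule.subset_span ⟨∅, by simp⟩
  | cons i l ih => rw [wedgeL_cons]; exact mul_mem_span b i _ ih

lemma mem_span_wedgeS (x : ExteriorAlgebra k W) :
    x ∈ Submodule.span k (Set.range (wedgeS b)) := by
  induction x using CliffordAlgebra.induction with
  | algebraMap r =>
    rw [Algebra.algebraMap_eq_smul_one]
    exact Submodule.smul_mem _ _ (wedgeL_mem_span b [])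
  | ι v =>
    rw [show (v : W) = ∑ i, b.repr v i • b i from (b.sum_repr v).symm, map_sum]
    refine Submodule.sum_mem _ fun i _ => ?_
    rw [map_smul]
    refine Submodule.smul_mem _ _ ?_
    simpa using wedgeL_mem_span b [i]
  | mul x y hx hy =>
    have hmm : x * y ∈ Submodule.span k (Set.range (wedgeS b)) *
        Submodule.span k (Set.range (wedgeS b)) := Submodule.mul_mem_mul hx hy
    rw [Submodule.span_mul_span] at hmm
    refine Submodule.span_le.2 ?_ hmm
    rintro z ⟨u, ⟨S, rfl⟩, v, ⟨T, rfl⟩, rfl⟩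
    show wedgeS b S * wedgeS b T ∈ _
    rw [wedgeS, wedgeS, ← wedgeL_append]
    exact wedgeL_mem_span b _
  | add x y hx hy => exact Submodule.add_mem _ hx hy

lemma span_wedgeS_eq_top :
    Submodule.span k (Set.range (wedgeS b)) = ⊤ :=
  eq_top_iff.2 fun x _ => mem_span_wedgeS b x

/-! ### Iterated contraction -/

def conL : List (Fin n) → (ExteriorAlgebra k W →ₗ[k] ExteriorAlgebra k W)
  | [] => LinearMap.id
  | i :: l => (conL l).comp (dd b i)

@[simp] lemma conL_nil : conL b [] = LinearMap.id := rfl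
@[simp] lemma conL_cons (i : Fin n) (l : List (Fin n)) (x : ExteriorAlgebra k W) :
    conL b (i :: l) x = conL b l (dd b i x) := rfl

lemma conL_self : ∀ l : List (Fin n), l.Nodup → conL b l (wedgeL b l) = 1
  | [], _ => rfl
  | i :: l, hnd => by
    rw [conL_cons, wedgeL_cons, dd_ι_mul, if_pos rfl, one_smul,
      dd_wedgeL_not_mem b i l (by simpa using (List.nodup_cons.mp hnd).1), mul_zero, sub_zero]
    exact conL_self l (List.Nodup.of_cons hnd)

lemma conL_wedgeS_zero : ∀ l : List (Fin n), l.Nodup → ∀ S : Finset (Fin n),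
    ¬ l.toFinset ⊆ S → conL b l (wedgeS b S) = 0
  | [], _, S, h => absurd (by simp) h
  | i :: l, hnd, S, h => by
    by_cases hiS : i ∈ S
    · obtain ⟨t, ht⟩ := dd_wedgeS_mem b i S hiS
      rw [conL_cons, ht, map_smul, conL_wedgeS_zero l (List.Nodup.of_cons hnd) (S.erase i)
        (fun hsub => h ?_), smul_zero]
      rw [List.toFinset_cons]
      rw [Finset.subset_erase] at hsub
      exact Finset.insert_subset hiS hsub.1
    · rw [conL_cons, dd_wedgeS_not_mem b i S hiS, map_zero]

lemma conL_wedgeS_sub : ∀ l : List (Fin n), l.Nodup → ∀ S : Finset (Fin n),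
    l.toFinset ⊆ S →
    ∃ t : ℕ, conL b l (wedgeS b S) = ((-1:k)^t) • wedgeS b (S \ l.toFinset)
  | [], _, S, _ => ⟨0, by simp⟩
  | i :: l, hnd, S, h => by
    have hiS : i ∈ S := h (by simp)
    have hil : i ∉ l := (List.nodup_cons.mp hnd).1
    obtain ⟨t, ht⟩ := dd_wedgeS_mem b i S hiS
    have hsub : l.toFinset ⊆ S.erase i := by
      rw [Finset.subset_erase]
      refine ⟨fun a ha => h (by simp [List.mem_toFinset.mp ha]), by simpa using hil⟩
    obtain ⟨t', ht'⟩ := conL_wedgeS_sub l (List.Nodup.of_cons hnd) (S.erase i) hsub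
    refine ⟨t + t', ?_⟩
    have hset : S.erase i \ l.toFinset = S \ (i :: l).toFinset := by
      ext a
      simp only [Finset.mem_sdiff, Finset.mem_erase, List.toFinset_cons, Finset.mem_insert,
        List.mem_toFinset]
      tauto
    rw [conL_cons, ht, map_smul, ht', smul_smul, ← pow_add, hset]


/-! ### Grading and linear independence -/

lemma wedgeL_mem_power : ∀ l : List (Fin n), wedgeL b l ∈ (⋀[k]^(l.length) W)
  | [] => by
    simp only [wedgeL_nil, List.length_nil, pow_zero]
    exact Submodule.one_le.mp le_rfl
  | i :: l => by
    show _ ∈ LinearMap.range (ExteriorAlgebra.ι k : W →ₗ[k] _) ^ (l.length + 1)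
    rw [pow_succ']
    exact Submodule.mul_mem_mul (LinearMap.mem_range_self _ (b i)) (wedgeL_mem_power l)

lemma wedgeS_mem_power (S : Finset (Fin n)) : wedgeS b S ∈ (⋀[k]^(S.card) W) := by
  have := wedgeL_mem_power b (S.sort (· ≤ ·))
  rwa [Finset.length_sort] at this

lemma proj_wedgeS (r : ℕ) (S : Finset (Fin n)) :
    GradedAlgebra.proj (fun i : ℕ => ⋀[k]^i W) r (wedgeS b S)
      = if S.card = r then wedgeS b S else 0 := by
  rw [GradedAlgebra.proj_apply]
  split_ifs with h
  · exact h ▸ DirectSum.decompose_of_mem_same _ (wedgeS_mem_power b S)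
  · exact DirectSum.decompose_of_mem_ne _ (wedgeS_mem_power b S) h

lemma linearIndependent_wedgeS : LinearIndependent k (wedgeS b) := by
  rw [linearIndependent_iff']
  intro s g hsum T hT
  set L : ExteriorAlgebra k W →ₗ[k] ExteriorAlgebra k W :=
    (conL b (T.sort (· ≤ ·))).comp (GradedAlgebra.proj (fun i : ℕ => ⋀[k]^i W) T.card) with hL
  have h0 : ∑ S ∈ s, g S • L (wedgeS b S) = 0 := by
    have := congrArg L hsum
    simpa [map_sum, map_smul] using this
  have hterm : ∀ S ∈ s, S ≠ T → g S • L (wedgeS b S) = 0 := by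
    intro S _ hne
    rw [hL, LinearMap.comp_apply, proj_wedgeS]
    split_ifs with hcard
    · by_cases hsub : (T.sort (· ≤ ·)).toFinset ⊆ S
      · exfalso
        rw [Finset.sort_toFinset] at hsub
        exact hne (Finset.eq_of_subset_of_card_le hsub (by rw [hcard])).symm
      · rw [conL_wedgeS_zero b _ (Finset.sort_nodup _ _) S hsub, smul_zero]
    · rw [map_zero, smul_zero]
  have hTval : L (wedgeS b T) = 1 := by
    rw [hL, LinearMap.comp_apply, proj_wedgeS, if_pos rfl]
    exact conL_self b _ (Finset.sort_nodup _ _)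
  rw [Finset.sum_eq_single_of_mem T hT hterm, hTval] at h0
  have : algebraMap k (ExteriorAlgebra k W) (g T) = algebraMap k _ 0 := by
    rw [map_zero, Algebra.algebraMap_eq_smul_one, h0]
  exact (ExteriorAlgebra.algebraMap_leftInverse W).injective this

def basisE : Module.Basis (Finset (Fin n)) k (ExteriorAlgebra k W) :=
  Module.Basis.mk (linearIndependent_wedgeS b) (ge_of_eq (span_wedgeS_eq_top b))

@[simp] lemma basisE_apply (S : Finset (Fin n)) : basisE b S = wedgeS b S :=
  Module.Basis.mk_apply _ _ _

lemma finrank_exterior' (bb : Module.Basis (Fin n) k W) :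
    Module.finrank k (ExteriorAlgebra k W) = 2 ^ n := by
  rw [Module.finrank_eq_card_basis (basisE bb), Fintype.card_finset, Fintype.card_fin]

lemma finite_exterior' (bb : Module.Basis (Fin n) k W) :
    FiniteDimensional k (ExteriorAlgebra k W) :=
  Module.Finite.of_basis (basisE bb)

lemma finrank_exterior (V : Type) [AddCommGroup V] [Module k V] [FiniteDimensional k V] :
    Module.finrank k (ExteriorAlgebra k V) = 2 ^ Module.finrank k V :=
  finrank_exterior' (Module.finBasis k V)


end Ext

/-! ### The Fock representation -/

section Fock

variable (k P : Type) [Field k] [AddCommGroup P] [Module k P]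

local notation "ιP" => CliffordAlgebra.ι (0 : QuadraticForm k P)

lemma hypForm_apply (x : Module.Dual k P × P) : hypForm k P x = x.1 x.2 := by
  rw [hypForm, LinearMap.BilinMap.toQuadraticMap_apply]
  rfl

def fockPre : (Module.Dual k P × P) →ₗ[k] Module.End k (ExteriorAlgebra k P) :=
  (CliffordAlgebra.contractLeft (Q := (0 : QuadraticForm k P))).comp
      (LinearMap.fst k (Module.Dual k P) P) +
    (LinearMap.mul k (ExteriorAlgebra k P)).comp
      ((CliffordAlgebra.ι (0 : QuadraticForm k P)).comp (LinearMap.snd k (Module.Dual k P) P))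

lemma fockPre_apply_apply (x : Module.Dual k P × P) (a : ExteriorAlgebra k P) :
    fockPre k P x a = contractLeft (Q := (0 : QuadraticForm k P)) x.1 a + ιP x.2 * a := by
  simp [fockPre, Module.End.mul_apply]

lemma fockPre_sq (x : Module.Dual k P × P) :
    fockPre k P x * fockPre k P x = algebraMap k (Module.End k (ExteriorAlgebra k P))
      (hypForm k P x) := by
  refine LinearMap.ext fun a => ?_
  rw [Module.End.mul_apply, fockPre_apply_apply, fockPre_apply_apply, Module.algebraMap_end_apply,
    hypForm_apply]
  rw [map_add, contractLeft_contractLeft, contractLeft_ι_mul, zero_add, mul_add,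
    ← mul_assoc, CliffordAlgebra.ι_sq_scalar]
  simp only [QuadraticMap.zero_apply, map_zero, zero_mul, add_zero]
  abel

def fock : CliffordAlgebra (hypForm k P) →ₐ[k] Module.End k (ExteriorAlgebra k P) :=
  CliffordAlgebra.lift (hypForm k P) ⟨fockPre k P, fockPre_sq k P⟩

lemma fock_ι (x : Module.Dual k P × P) :
    fock k P (CliffordAlgebra.ι (hypForm k P) x) = fockPre k P x :=
  CliffordAlgebra.lift_ι_apply _ _ _

lemma contractLeft_mem_range (t : Module.Dual k P) :
    (contractLeft (Q := (0 : QuadraticForm k P)) t : Module.End k (ExteriorAlgebra k P))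
      ∈ (fock k P).range := by
  refine ⟨CliffordAlgebra.ι (hypForm k P) (t, 0), ?_⟩
  show fock k P _ = _
  rw [fock_ι]
  refine LinearMap.ext fun a => ?_
  rw [fockPre_apply_apply]
  simp

lemma mulLeft_mem_range (v : P) :
    (LinearMap.mul k (ExteriorAlgebra k P) (ιP v)) ∈ (fock k P).range := by
  refine ⟨CliffordAlgebra.ι (hypForm k P) (0, v), ?_⟩
  show fock k P _ = _
  rw [fock_ι]
  refine LinearMap.ext fun a => ?_
  rw [fockPre_apply_apply]
  simp [Module.End.mul_apply]

end Fock

/-! ### Surjectivity of the Fock representation -/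

section Surj

variable (k P : Type) [Field k] [AddCommGroup P] [Module k P]
variable {n : ℕ} (b : Module.Basis (Fin n) k P)

local notation "ιP" => CliffordAlgebra.ι (0 : QuadraticForm k P)
local notation "EE" => Module.End k (ExteriorAlgebra k P)

def NE (i : Fin n) : EE :=
  (LinearMap.mul k (ExteriorAlgebra k P) (ιP (b i))) * (dd b i)

lemma NE_apply (i : Fin n) (S : Finset (Fin n)) :
    NE k P b i (wedgeS b S) = if i ∈ S then wedgeS b S else 0 := by
  rw [NE, Module.End.mul_apply]
  split_ifs with h
  · rw [LinearMap.mul_apply']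
    exact reinsert b i _ (Finset.sort_nodup _ _) (by simpa [Finset.mem_sort] using h)
  · rw [dd_wedgeS_not_mem b i S h, map_zero]

def PZl (l : List (Fin n)) : EE :=
  (l.map (fun i => (1 : EE) - NE k P b i)).prod

lemma PZl_apply : ∀ (l : List (Fin n)) (S : Finset (Fin n)),
    PZl k P b l (wedgeS b S) = if ∀ i ∈ l, i ∉ S then wedgeS b S else 0
  | [], S => by simp [PZl]
  | i :: l, S => by
    rw [PZl, List.map_cons, List.prod_cons, Module.End.mul_apply, ← PZl, PZl_apply l S]
    by_cases hl : ∀ j ∈ l, j ∉ S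
    · rw [if_pos hl, LinearMap.sub_apply, Module.End.one_apply, NE_apply]
      by_cases hi : i ∈ S
      · rw [if_pos hi, sub_self, if_neg (by push_neg; exact ⟨i, List.mem_cons_self, hi⟩)]
      · rw [if_neg hi, sub_zero, if_pos (by
          intro j hj
          rcases List.mem_cons.mp hj with rfl | hj
          · exact hi
          · exact hl j hj)]
    · rw [if_neg hl, map_zero, if_neg (by
        push_neg at hl ⊢
        obtain ⟨j, hj, hjS⟩ := hl
        exact ⟨j, List.mem_cons_of_mem _ hj, hjS⟩)]

def PZ : EE := PZl k P b (List.finRange n)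

lemma PZ_apply (S : Finset (Fin n)) :
    PZ k P b (wedgeS b S) = if S = ∅ then 1 else 0 := by
  rw [PZ, PZl_apply]
  by_cases h : S = ∅
  · rw [if_pos (by simp [h]), if_pos h, h, wedgeS_empty]
  · rw [if_neg h, if_neg (by
      intro hall
      exact h (Finset.eq_empty_iff_forall_notMem.2 fun i hi =>
        hall i (List.mem_finRange i) hi))]

def AEl (l : List (Fin n)) : EE :=
  (l.map (fun i => LinearMap.mul k (ExteriorAlgebra k P) (ιP (b i)))).prod

lemma AEl_apply : ∀ (l : List (Fin n)) (x : ExteriorAlgebra k P),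
    AEl k P b l x = wedgeL b l * x
  | [], x => by simp [AEl]
  | i :: l, x => by
    rw [AEl, List.map_cons, List.prod_cons, Module.End.mul_apply, ← AEl, AEl_apply l x,
      LinearMap.mul_apply', wedgeL_cons, mul_assoc]

def Eop (S T : Finset (Fin n)) : EE :=
  AEl k P b (S.sort (· ≤ ·)) * (PZ k P b * conL b (T.sort (· ≤ ·)))

lemma Eop_apply (S T U : Finset (Fin n)) :
    Eop k P b S T (wedgeS b U) = if U = T then wedgeS b S else 0 := by
  rw [Eop, Module.End.mul_apply, Module.End.mul_apply]
  by_cases h : U = T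
  · subst h
    rw [show conL b (U.sort (· ≤ ·)) (wedgeS b U) = 1 from
        conL_self b _ (Finset.sort_nodup _ _),
      show (1 : ExteriorAlgebra k P) = wedgeS b ∅ from (wedgeS_empty b).symm,
      PZ_apply, if_pos rfl, if_pos rfl]
    rw [show (1 : ExteriorAlgebra k P) = wedgeS b ∅ from (wedgeS_empty b).symm, AEl_apply]
    rw [wedgeS_empty, mul_one, wedgeS]
  · rw [if_neg h]
    by_cases hsub : (T.sort (· ≤ ·)).toFinset ⊆ U
    · obtain ⟨t, ht⟩ := conL_wedgeS_sub b _ (Finset.sort_nodup _ _) U hsub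
      rw [Finset.sort_toFinset] at hsub ht
      have hne : U \ T ≠ ∅ := by
        rw [Ne, Finset.sdiff_eq_empty_iff_subset]
        intro hUT
        exact h (Finset.Subset.antisymm hUT hsub)
      rw [ht, map_smul, PZ_apply, if_neg hne, smul_zero, map_zero]
    · rw [conL_wedgeS_zero b _ (Finset.sort_nodup _ _) U hsub, map_zero, map_zero]

lemma conL_mem_range : ∀ l : List (Fin n), (conL b l : EE) ∈ (fock k P).range
  | [] => one_mem _
  | i :: l => mul_mem (conL_mem_range l) (contractLeft_mem_range k P (b.coord i))

lemma AEl_mem_range (l : List (Fin n)) : AEl k P b l ∈ (fock k P).range := by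
  refine list_prod_mem fun x hx => ?_
  obtain ⟨i, -, rfl⟩ := List.mem_map.mp hx
  exact mulLeft_mem_range k P (b i)

lemma PZ_mem_range : PZ k P b ∈ (fock k P).range := by
  refine list_prod_mem fun x hx => ?_
  obtain ⟨i, -, rfl⟩ := List.mem_map.mp hx
  exact sub_mem (one_mem _) (mul_mem (mulLeft_mem_range k P (b i))
    (contractLeft_mem_range k P (b.coord i)))

lemma Eop_mem_range (S T : Finset (Fin n)) : Eop k P b S T ∈ (fock k P).range :=
  mul_mem (AEl_mem_range k P b _) (mul_mem (PZ_mem_range k P b) (conL_mem_range k P b _))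

include b in
lemma fock_surjective : Function.Surjective (fock k P) := by
  intro g
  have hrepr : g = ∑ p : Finset (Fin n) × Finset (Fin n),
      (basisE b).repr (g (wedgeS b p.2)) p.1 • Eop k P b p.1 p.2 := by
    refine (basisE b).ext fun U => ?_
    rw [basisE_apply]
    rw [LinearMap.sum_apply]
    simp only [LinearMap.smul_apply, Eop_apply, smul_ite, smul_zero]
    rw [Fintype.sum_prod_type_right]
    simp only [Finset.sum_ite_irrel, Finset.sum_const_zero, Finset.sum_ite_eq, Finset.mem_univ,
      if_true]
    have := Module.Basis.sum_repr (basisE b) (g (wedgeS b U))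
    simp only [basisE_apply] at this
    exact this.symm
  have : g ∈ (fock k P).range := by
    rw [hrepr]
    exact sum_mem fun p _ => SMulMemClass.smul_mem _ (Eop_mem_range k P b p.1 p.2)
  exact this

end Surj

/-! ### Transfer lemmas -/

lemma isSimpleRing_of_ringEquiv {A B : Type} [Ring A] [Ring B] (e : A ≃+* B)
    [IsSimpleRing B] : IsSimpleRing A := by
  haveI : Nontrivial A := e.toEquiv.nontrivial
  refine (IsSimpleRing.iff_injective_ringHom A).2 fun {S} _ _ f => ?_
  have h1 : Function.Injective (f.comp e.symm.toRingHom) := RingHom.injective _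
  have h2 : Function.Injective (⇑f ∘ ⇑e.symm) := h1
  have := h2.comp e.injective
  simpa [Function.comp_assoc, Function.comp_def] using this

lemma isCentral_of_algEquiv (k : Type) [Field k] {A B : Type} [Ring A] [Ring B]
    [Algebra k A] [Algebra k B] (e : A ≃ₐ[k] B) [Algebra.IsCentral k B] :
    Algebra.IsCentral k A where
  out x hx := by
    have hc : e x ∈ Subalgebra.center k B := by
      rw [Subalgebra.mem_center_iff] at hx ⊢
      intro c
      have h := hx (e.symm c)
      calc c * e x = e (e.symm c * x) := by rw [map_mul, e.apply_symm_apply]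
        _ = e (x * e.symm c) := by rw [h]
        _ = e x * c := by rw [map_mul, e.apply_symm_apply]
    have := Algebra.IsCentral.out (K := k) (D := B) hc
    rw [Algebra.mem_bot] at this ⊢
    obtain ⟨r, hr⟩ := this
    exact ⟨r, by
      apply e.injective
      rw [← hr, AlgEquiv.commutes]⟩

/-! ### Main assembly -/

section Main

variable (k P : Type) [Field k] [AddCommGroup P] [Module k P] [FiniteDimensional k P]

theorem main (hchar : (2 : k) ≠ 0)
    (m : ℕ) (hm : Module.finrank k P = m) (hm1 : 1 ≤ m) :
    (QuadraticMap.polarBilin (hypForm k P)).SeparatingLeft ∧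
    Nonempty (CliffordAlgebra (hypForm k P) ≃ₐ[k]
      Module.End k (ExteriorAlgebra k P)) ∧
    Module.finrank k (CliffordAlgebra (hypForm k P)) = 2 ^ (2 * m) ∧
    Algebra.IsCentral k (CliffordAlgebra (hypForm k P)) ∧
    IsSimpleRing (CliffordAlgebra (hypForm k P)) ∧
    (∃ nn : ℕ, 0 < nn ∧
      Nonempty (CliffordAlgebra (hypForm k P) ≃ₐ[k] Matrix (Fin nn) (Fin nn) k)) := by
  -- separating
  have hsep : (QuadraticMap.polarBilin (hypForm k P)).SeparatingLeft := by
    intro x hx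
    have hx' : ∀ y : Module.Dual k P × P, x.1 y.2 + y.1 x.2 = 0 := by
      intro y
      have h := hx y
      rwa [QuadraticMap.polarBilin_apply_apply, hypForm,
        LinearMap.BilinMap.polar_toQuadraticMap] at h
    have h1 : x.1 = 0 := by
      ext w
      simpa using hx' (0, w)
    have h2 : x.2 = 0 := by
      rw [← Module.forall_dual_apply_eq_zero_iff k x.2]
      intro s
      simpa using hx' (s, 0)
    exact Prod.ext h1 h2
  -- setup
  letI := invertibleOfNonzero hchar
  have b : Module.Basis (Fin m) k P := Module.finBasisOfFinrankEq k P hm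
  haveI : FiniteDimensional k (ExteriorAlgebra k P) := finite_exterior' b
  haveI : FiniteDimensional k (ExteriorAlgebra k (Module.Dual k P × P)) :=
    finite_exterior' (Module.finBasis k _)
  haveI : FiniteDimensional k (CliffordAlgebra (hypForm k P)) :=
    Module.Finite.equiv (CliffordAlgebra.equivExterior (hypForm k P)).symm
  have hE : Module.finrank k (ExteriorAlgebra k P) = 2 ^ m := finrank_exterior' b
  have hC : Module.finrank k (CliffordAlgebra (hypForm k P)) = 2 ^ (2 * m) := by
    rw [(CliffordAlgebra.equivExterior (hypForm k P)).finrank_eq, finrank_exterior,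
      Module.finrank_prod, Subspace.dual_finrank_eq, hm, two_mul]
  have hEnd : Module.finrank k (Module.End k (ExteriorAlgebra k P)) = 2 ^ (2 * m) := by
    rw [Module.finrank_linearMap, hE, ← pow_add, two_mul]
  -- the algebra equivalence
  have hsurj : Function.Surjective (fock k P) := fock_surjective k P b
  have hinj : Function.Injective (fock k P) :=
    (LinearMap.injective_iff_surjective_of_finrank_eq_finrank
      (f := (fock k P).toLinearMap) (by rw [hC, hEnd])).2 hsurj
  let e : CliffordAlgebra (hypForm k P) ≃ₐ[k] Module.End k (ExteriorAlgebra k P) :=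
    AlgEquiv.ofBijective (fock k P) ⟨hinj, hsurj⟩
  -- matrix equivalence
  have card2 : Fintype.card (Finset (Fin m)) = 2 ^ m := by simp
  let eIdx : Finset (Fin m) ≃ Fin (2 ^ m) := Fintype.equivFinOfCardEq card2
  let eM : Module.End k (ExteriorAlgebra k P) ≃ₐ[k] Matrix (Fin (2 ^ m)) (Fin (2 ^ m)) k :=
    (algEquivMatrix (basisE b)).trans (Matrix.reindexAlgEquiv k k eIdx)
  let EC : CliffordAlgebra (hypForm k P) ≃ₐ[k] Matrix (Fin (2 ^ m)) (Fin (2 ^ m)) k :=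
    e.trans eM
  haveI : Nonempty (Fin (2 ^ m)) := ⟨⟨0, pow_pos (by norm_num) m⟩⟩
  haveI hsimple : IsSimpleRing (CliffordAlgebra (hypForm k P)) :=
    isSimpleRing_of_ringEquiv EC.toRingEquiv
  haveI hcentral : Algebra.IsCentral k (CliffordAlgebra (hypForm k P)) :=
    isCentral_of_algEquiv k EC
  exact ⟨hsep, ⟨e⟩, hC, hcentral, hsimple, ⟨2 ^ m, pow_pos (by norm_num) m, ⟨EC⟩⟩⟩

end Main

end CliffHyp


/-- The hyperbolic form `H(P)` is nondegenerate and its Clifford algebra is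
isomorphic to `End(Λ P)`; in particular it has dimension `2^(2m)` and is a
central simple algebra with trivial Brauer class. -/
theorem clifford_hyperbolic_form
    (k P : Type) [Field k] [AddCommGroup P] [Module k P] [FiniteDimensional k P]
    (hchar : (2 : k) ≠ 0)
    (m : ℕ) (hm : Module.finrank k P = m) (hm1 : 1 ≤ m) :
    (QuadraticMap.polarBilin (hypForm k P)).SeparatingLeft ∧
    Nonempty (CliffordAlgebra (hypForm k P) ≃ₐ[k]
      Module.End k (ExteriorAlgebra k P)) ∧
    Module.finrank k (CliffordAlgebra (hypForm k P)) = 2 ^ (2 * m) ∧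
    Algebra.IsCentral k (CliffordAlgebra (hypForm k P)) ∧
    IsSimpleRing (CliffordAlgebra (hypForm k P)) ∧
    IsBrauerTrivial k (CliffordAlgebra (hypForm k P)) := by
  obtain ⟨h1, h2, h3, h4, h5, h6⟩ := CliffHyp.main k P hchar m hm hm1
  exact ⟨h1, h2, h3, h4, h5, h6⟩
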